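/- Validity of the monotone pre-assignment inequalities for the a-priori assignment problem: with the data below, among all feasible pre-assignments a there exists one maximizing the total weight ∑_{(t,j) : a(t,j) ≠ none} π_{t,j}·p_t and additionally satisfying, for every type t and every j with j+1 < k_t: if a(t, j+1) ≠ none then a(t, j) ≠ none (the (j+1)-st copy of a type is assigned only if the j-th copy is assigned). -/

import Mathlib

/-- Validity of the monotone pre-assignment inequalities for the a-priori assignment
problem.  Request types `T` (finite, nonempty) have group sizes `n_t`, itineraries
`Leg t ⊆ L`, fares `p_t ≥ 0`, and `k_t` potential copies; the `j`-th copy (`j < k_t`) of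
type `t` arrives with probability `π_{t,j} ∈ [0,1]`, nonincreasing in `j`.  Coaches `C`
(finite, nonempty) have seating capacity `ω` on every leg.  A pre-assignment
`a : (t,j) ↦ Option C` is feasible if on every leg `ℓ` and coach `c` the total group size of
assigned copies whose itinerary contains `ℓ` is at most `ω`; its weight is
`∑ π_{t,j}·p_t` over assigned pairs.  Then among all feasible pre-assignments there exists
one of maximum weight that moreover assigns the `(j+1)`-st copy of a type only if the `j`-th
copy is assigned. -/
theorem exists_optimal_monotone_preassignment
    {T C L : Type*} [Fintype T] [Nonempty T] [Fintype C] [Nonempty C] [DecidableEq C]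
    [Fintype L] [DecidableEq L]
    (n : T → ℕ) (Leg : T → Finset L) (p : T → ℝ) (hp : ∀ t, 0 ≤ p t)
    (k : T → ℕ) (π : T → ℕ → ℝ)
    (hπ0 : ∀ t j, j < k t → 0 ≤ π t j) (hπ1 : ∀ t j, j < k t → π t j ≤ 1)
    (hπmono : ∀ t j, j + 1 < k t → π t (j + 1) ≤ π t j)
    (ω : ℕ) :
    ∃ a : T → ℕ → Option C,
      -- `a` is feasible
      (∀ ℓ : L, ∀ c : C,
        ∑ t, ∑ j ∈ Finset.range (k t),
          (if a t j = some c ∧ ℓ ∈ Leg t then n t else 0) ≤ ω) ∧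
      -- `a` has maximum weight among all feasible pre-assignments
      (∀ a' : T → ℕ → Option C,
        (∀ ℓ : L, ∀ c : C,
          ∑ t, ∑ j ∈ Finset.range (k t),
            (if a' t j = some c ∧ ℓ ∈ Leg t then n t else 0) ≤ ω) →
        (∑ t, ∑ j ∈ Finset.range (k t), (if a' t j = none then 0 else π t j * p t))
          ≤ ∑ t, ∑ j ∈ Finset.range (k t), (if a t j = none then 0 else π t j * p t)) ∧
      -- the `(j+1)`-st copy of a type is assigned only if the `j`-th copy is assigned
      (∀ t, ∀ j, j + 1 < k t → a t (j + 1) ≠ none → a t j ≠ none) := by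
  classical
  -- feasibility, weight and potential of a pre-assignment
  let Feas : (T → ℕ → Option C) → Prop := fun a =>
    ∀ ℓ : L, ∀ c : C,
      ∑ t, ∑ j ∈ Finset.range (k t),
        (if a t j = some c ∧ ℓ ∈ Leg t then n t else 0) ≤ ω
  let W : (T → ℕ → Option C) → ℝ := fun a =>
    ∑ t, ∑ j ∈ Finset.range (k t), (if a t j = none then 0 else π t j * p t)
  let Φ : (T → ℕ → Option C) → ℕ := fun a =>
    ∑ t, ∑ j ∈ Finset.range (k t), (if a t j = none then 0 else j)
  -- everything only depends on values with `j < k t`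
  have congrFeas : ∀ a b : T → ℕ → Option C,
      (∀ t j, j < k t → a t j = b t j) → (Feas a ↔ Feas b) := by
    intro a b hab
    have key : ∀ ℓ : L, ∀ c : C,
        (∑ t, ∑ j ∈ Finset.range (k t),
          (if a t j = some c ∧ ℓ ∈ Leg t then n t else 0)) =
        ∑ t, ∑ j ∈ Finset.range (k t),
          (if b t j = some c ∧ ℓ ∈ Leg t then n t else 0) := by
      intro ℓ c
      refine Finset.sum_congr rfl fun t _ => Finset.sum_congr rfl fun j hj => ?_
      rw [hab t j (Finset.mem_range.1 hj)]
    constructor <;> intro h ℓ c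
    · rw [← key]; exact h ℓ c
    · rw [key]; exact h ℓ c
  have congrW : ∀ a b : T → ℕ → Option C,
      (∀ t j, j < k t → a t j = b t j) → W a = W b := by
    intro a b hab
    refine Finset.sum_congr rfl fun t _ => Finset.sum_congr rfl fun j hj => ?_
    rw [hab t j (Finset.mem_range.1 hj)]
  have congrΦ : ∀ a b : T → ℕ → Option C,
      (∀ t j, j < k t → a t j = b t j) → Φ a = Φ b := by
    intro a b hab
    refine Finset.sum_congr rfl fun t _ => Finset.sum_congr rfl fun j hj => ?_
    rw [hab t j (Finset.mem_range.1 hj)]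
  -- finite search space
  haveI := Classical.decEq T
  let A := ∀ t : T, Fin (k t) → Option C
  let ext : A → T → ℕ → Option C := fun b t j =>
    if h : j < k t then b t ⟨j, h⟩ else none
  have ext_lt : ∀ (b : A) (t : T) (j : ℕ) (h : j < k t), ext b t j = b t ⟨j, h⟩ := by
    intro b t j h; simp only [ext, dif_pos h]
  let S : Finset A := Finset.univ.filter fun b => Feas (ext b)
  have hS0 : (fun _ _ => none : A) ∈ S := by
    simp only [S, Finset.mem_filter, Finset.mem_univ, true_and]
    intro ℓ c
    have : ∀ t : T, ∀ j ∈ Finset.range (k t),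
        (if ext (fun _ _ => none : A) t j = some c ∧ ℓ ∈ Leg t then n t else 0) = 0 := by
      intro t j _
      have : ext (fun _ _ => none : A) t j = none := by
        simp [ext]
      simp [this]
    calc ∑ t, ∑ j ∈ Finset.range (k t),
          (if ext (fun _ _ => none : A) t j = some c ∧ ℓ ∈ Leg t then n t else 0)
        = ∑ t : T, 0 := Finset.sum_congr rfl fun t _ => Finset.sum_eq_zero (this t)
      _ = 0 := Finset.sum_const_zero
      _ ≤ ω := Nat.zero_le ω
  -- restriction of an arbitrary feasible pre-assignment into the search space
  have restrict : ∀ a' : T → ℕ → Option C, Feas a' →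
      ∃ b : A, b ∈ S ∧ W (ext b) = W a' := by
    intro a' ha'
    refine ⟨fun t j => a' t j.val, ?_, ?_⟩
    · have hagree : ∀ t j, j < k t → ext (fun t j => a' t (j : ℕ)) t j = a' t j :=
        fun t j h => ext_lt (fun t j => a' t (j : ℕ)) t j h
      simp only [S, Finset.mem_filter, Finset.mem_univ, true_and]
      exact (congrFeas _ _ hagree).2 ha'
    · exact congrW _ _ fun t j h => ext_lt (fun t j => a' t (j : ℕ)) t j h
  -- first choose a weight maximizer, then among maximizers a `Φ`-minimizer
  obtain ⟨b1, hb1S, hb1max⟩ := S.exists_max_image (fun b => W (ext b)) ⟨_, hS0⟩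
  let S2 : Finset A := S.filter fun b => W (ext b1) ≤ W (ext b)
  have hb1S2 : b1 ∈ S2 := Finset.mem_filter.2 ⟨hb1S, le_refl _⟩
  obtain ⟨b2, hb2S2, hb2min⟩ := S2.exists_min_image (fun b => Φ (ext b)) ⟨b1, hb1S2⟩
  obtain ⟨hb2S, hb2W⟩ := Finset.mem_filter.1 hb2S2
  set a : T → ℕ → Option C := ext b2 with ha
  have hfeas : Feas a := (Finset.mem_filter.1 hb2S).2
  have hmax : ∀ a' : T → ℕ → Option C, Feas a' → W a' ≤ W a := by
    intro a' ha'
    obtain ⟨b, hbS, hbW⟩ := restrict a' ha'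
    calc W a' = W (ext b) := hbW.symm
      _ ≤ W (ext b1) := hb1max b hbS
      _ ≤ W a := hb2W
  -- support of `a`
  have hsupp : ∀ t j, ¬ j < k t → a t j = none := by
    intro t j h; simp only [ha, ext, dif_neg h]
  refine ⟨a, hfeas, hmax, ?_⟩
  -- monotonicity: suppose a violation exists and swap
  intro t0 j0 hj0 hne
  by_contra h0
  have h00 : a t0 j0 = none := h0
  -- the swapped pre-assignment
  let a'' : T → ℕ → Option C := fun t j =>
    if t = t0 then
      (if j = j0 then a t0 (j0 + 1) else if j = j0 + 1 then a t0 j0 else a t0 j)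
    else a t j
  have ha''_other : ∀ t, t ≠ t0 → ∀ j, a'' t j = a t j := by
    intro t ht j; simp only [a'', if_neg ht]
  have ha''_swap : ∀ j, a'' t0 j = a t0 (Equiv.swap j0 (j0 + 1) j) := by
    intro j
    simp only [a'', if_pos rfl, Equiv.swap_apply_def]
    split_ifs <;> rfl
  have hswap_mem : ∀ j : ℕ, j ∈ Finset.range (k t0) ↔
      Equiv.swap j0 (j0 + 1) j ∈ Finset.range (k t0) := by
    intro j
    simp only [Finset.mem_range, Equiv.swap_apply_def]
    split_ifs with h1 h2 <;> omega
  -- feasibility of the swap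
  have hfeas'' : Feas a'' := by
    intro ℓ c
    have key : ∀ t : T,
        (∑ j ∈ Finset.range (k t), (if a'' t j = some c ∧ ℓ ∈ Leg t then n t else 0)) =
        ∑ j ∈ Finset.range (k t), (if a t j = some c ∧ ℓ ∈ Leg t then n t else 0) := by
      intro t
      by_cases ht : t = t0
      · subst ht
        refine Finset.sum_equiv (Equiv.swap j0 (j0 + 1)) hswap_mem ?_
        intro j _
        rw [ha''_swap j]
      · exact Finset.sum_congr rfl fun j _ => by rw [ha''_other t ht j]
    calc ∑ t, ∑ j ∈ Finset.range (k t), (if a'' t j = some c ∧ ℓ ∈ Leg t then n t else 0)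
        = ∑ t, ∑ j ∈ Finset.range (k t), (if a t j = some c ∧ ℓ ∈ Leg t then n t else 0) :=
          Finset.sum_congr rfl fun t _ => key t
      _ ≤ ω := hfeas ℓ c
  -- pair decomposition inside type `t0`
  have hpair_sub : ({j0, j0 + 1} : Finset ℕ) ⊆ Finset.range (k t0) := by
    intro x hx
    simp only [Finset.mem_insert, Finset.mem_singleton] at hx
    rcases hx with rfl | rfl <;> simp only [Finset.mem_range] <;> omega
  have hpair_ne : j0 ≠ j0 + 1 := by omega
  have hval0 : a'' t0 j0 = a t0 (j0 + 1) := by simp [a'']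
  have hval1 : a'' t0 (j0 + 1) = a t0 j0 := by
    have h1 : j0 + 1 ≠ j0 := by omega
    simp [a'', h1]
  have hoff : ∀ j ∈ Finset.range (k t0) \ ({j0, j0 + 1} : Finset ℕ), a'' t0 j = a t0 j := by
    intro j hj
    simp only [Finset.mem_sdiff, Finset.mem_insert, Finset.mem_singleton, not_or] at hj
    simp only [a'', if_pos rfl, if_neg hj.2.1, if_neg hj.2.2]
  have hdecomp : ∀ f : ℕ → Option C, ∀ g : ℕ → ℝ,
      (∑ j ∈ Finset.range (k t0), (if f j = none then 0 else g j)) =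
      (∑ j ∈ Finset.range (k t0) \ ({j0, j0 + 1} : Finset ℕ),
        (if f j = none then 0 else g j)) +
      ((if f j0 = none then 0 else g j0) + (if f (j0 + 1) = none then 0 else g (j0 + 1))) := by
    intro f g
    rw [← Finset.sum_sdiff hpair_sub, Finset.sum_pair hpair_ne]
  -- weight does not decrease
  have hWle : W a ≤ W a'' := by
    have key : ∀ t : T,
        (∑ j ∈ Finset.range (k t), (if a t j = none then 0 else π t j * p t)) ≤
        ∑ j ∈ Finset.range (k t), (if a'' t j = none then 0 else π t j * p t) := by
      intro t
      by_cases ht : t = t0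
      · rw [ht]
        rw [hdecomp (a t0) (fun j => π t0 j * p t0),
            hdecomp (a'' t0) (fun j => π t0 j * p t0)]
        have e1 : (Finset.range (k t0) \ ({j0, j0 + 1} : Finset ℕ)).sum
              (fun j => if a t0 j = none then 0 else π t0 j * p t0) =
            (Finset.range (k t0) \ ({j0, j0 + 1} : Finset ℕ)).sum
              (fun j => if a'' t0 j = none then 0 else π t0 j * p t0) :=
          Finset.sum_congr rfl fun j hj => by rw [hoff j hj]
        rw [e1]
        refine add_le_add (le_refl _) ?_
        have A0 : (if a'' t0 j0 = none then (0:ℝ) else π t0 j0 * p t0) = π t0 j0 * p t0 := by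
          rw [hval0]; exact if_neg hne
        have A1 : (if a'' t0 (j0 + 1) = none then (0:ℝ) else π t0 (j0 + 1) * p t0) = 0 := by
          rw [hval1, h00]; simp
        have B0 : (if a t0 j0 = none then (0:ℝ) else π t0 j0 * p t0) = 0 := by rw [h00]; simp
        have B1 : (if a t0 (j0 + 1) = none then (0:ℝ) else π t0 (j0 + 1) * p t0)
            = π t0 (j0 + 1) * p t0 := if_neg hne
        rw [A0, A1, B0, B1]
        have hx := mul_le_mul_of_nonneg_right (hπmono t0 j0 hj0) (hp t0)
        linarith
      · exact le_of_eq (Finset.sum_congr rfl fun j _ => by rw [ha''_other t ht j])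
    exact Finset.sum_le_sum fun t _ => key t
  -- potential strictly decreases
  have hΦlt : Φ a'' < Φ a := by
    have hdecompN : ∀ f : ℕ → Option C,
        (∑ j ∈ Finset.range (k t0), (if f j = none then 0 else j)) =
        (∑ j ∈ Finset.range (k t0) \ ({j0, j0 + 1} : Finset ℕ),
          (if f j = none then 0 else j)) +
        ((if f j0 = none then 0 else j0) + (if f (j0 + 1) = none then 0 else j0 + 1)) := by
      intro f
      rw [← Finset.sum_sdiff hpair_sub, Finset.sum_pair hpair_ne]
    have keylt : (∑ j ∈ Finset.range (k t0), (if a'' t0 j = none then 0 else j)) <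
        ∑ j ∈ Finset.range (k t0), (if a t0 j = none then 0 else j) := by
      rw [hdecompN (a t0), hdecompN (a'' t0)]
      have e1 : (Finset.range (k t0) \ ({j0, j0 + 1} : Finset ℕ)).sum
            (fun j => if a'' t0 j = none then 0 else j) =
          (Finset.range (k t0) \ ({j0, j0 + 1} : Finset ℕ)).sum
            (fun j => if a t0 j = none then 0 else j) :=
        Finset.sum_congr rfl fun j hj => by rw [hoff j hj]
      rw [e1]
      refine Nat.add_lt_add_left ?_ _
      have A0 : (if a'' t0 j0 = none then (0:ℕ) else j0) = j0 := by
        rw [hval0]; exact if_neg hne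
      have A1 : (if a'' t0 (j0 + 1) = none then (0:ℕ) else j0 + 1) = 0 := by
        rw [hval1, h00]; simp
      have B0 : (if a t0 j0 = none then (0:ℕ) else j0) = 0 := by rw [h00]; simp
      have B1 : (if a t0 (j0 + 1) = none then (0:ℕ) else j0 + 1) = j0 + 1 := if_neg hne
      rw [A0, A1, B0, B1]
      omega
    have hle : ∀ t : T, t ∈ Finset.univ →
        (∑ j ∈ Finset.range (k t), (if a'' t j = none then 0 else j)) ≤
        ∑ j ∈ Finset.range (k t), (if a t j = none then 0 else j) := by
      intro t _
      by_cases ht : t = t0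
      · rw [ht]; exact le_of_lt keylt
      · exact le_of_eq (Finset.sum_congr rfl fun j _ => by rw [ha''_other t ht j])
    exact Finset.sum_lt_sum hle ⟨t0, Finset.mem_univ t0, keylt⟩
  -- put the swap back into the search space and contradict minimality
  have hsupp'' : ∀ t j, j < k t → ext (fun t j => a'' t (j : ℕ)) t j = a'' t j :=
    fun t j h => ext_lt (fun t j => a'' t (j : ℕ)) t j h
  set b'' : A := fun t j => a'' t (j : ℕ) with hb''
  have hb''S : b'' ∈ S := by
    simp only [S, Finset.mem_filter, Finset.mem_univ, true_and]
    exact (congrFeas _ _ hsupp'').2 hfeas''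
  have hb''W : W (ext b'') = W a'' := congrW _ _ hsupp''
  have hb''Φ : Φ (ext b'') = Φ a'' := congrΦ _ _ hsupp''
  have hb''S2 : b'' ∈ S2 := by
    refine Finset.mem_filter.2 ⟨hb''S, ?_⟩
    calc W (ext b1) ≤ W a := hb2W
      _ ≤ W a'' := hWle
      _ = W (ext b'') := hb''W.symm
  have := hb2min b'' hb''S2
  rw [hb''Φ] at this
  exact absurd (lt_of_lt_of_le hΦlt this) (lt_irrefl _)
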